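/- Let a₁, a₂, b₁, b₂, A, D ∈ ℂ with D = (a₁b₂ - a₂b₁)/(2i) ≠ 0 (taking k = 1), a₁a₂ ≠ 0, and A² = (b₁b₂)/(a₁a₂). Let g : ℂ² → ℂ be given by g(z₁, z₂) = A·z₁ + g₂(z₂) for some entire g₂, let c = (c₁, c₂) ∈ ℂ², suppose g(z) - g(z - c) is a constant κ with exp(iκ) = b₂/(i·a₂·A). Define f(z) = (a₁·exp(i·g(z - c)) - a₂·exp(-i·g(z - c)))/(2iD). Then for all z ∈ ℂ²: ∂f/∂z₁(z) = (-b₁·exp(i·g(z)) + b₂·exp(-i·g(z)))/(2iD) and f(z + c) = (a₁·exp(i·g(z)) - a₂·exp(-i·g(z)))/(2iD). -/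

import Mathlib

open Complex

theorem stmt_18 (a₁ a₂ b₁ b₂ A D : ℂ)
    (hD : D = (a₁ * b₂ - a₂ * b₁) / (2 * I)) (hD0 : D ≠ 0)
    (ha : a₁ * a₂ ≠ 0)
    (hA : A ^ 2 = (b₁ * b₂) / (a₁ * a₂))
    (g₂ : ℂ → ℂ) (hg₂ : Differentiable ℂ g₂)
    (g : ℂ × ℂ → ℂ)
    (hg : ∀ z₁ z₂ : ℂ, g (z₁, z₂) = A * z₁ + g₂ z₂)
    (c : ℂ × ℂ) (κ : ℂ)
    (hκ : ∀ z : ℂ × ℂ, g z - g (z - c) = κ)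
    (hκ' : exp (I * κ) = b₂ / (I * a₂ * A))
    (f : ℂ × ℂ → ℂ)
    (hf : ∀ z : ℂ × ℂ, f z =
      (a₁ * exp (I * g (z - c)) - a₂ * exp (-(I * g (z - c)))) / (2 * I * D)) :
    ∀ z : ℂ × ℂ,
      deriv (fun w => f (w, z.2)) z.1
        = (-b₁ * exp (I * g z) + b₂ * exp (-(I * g z))) / (2 * I * D) ∧
      f (z + c) = (a₁ * exp (I * g z) - a₂ * exp (-(I * g z))) / (2 * I * D) := by
  have ha₁ : a₁ ≠ 0 := fun h => ha (by simp [h])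
  have ha₂ : a₂ ≠ 0 := fun h => ha (by simp [h])
  have hA0 : A ≠ 0 := by
    intro h
    rw [h] at hκ'
    simp at hκ'
  have hb₂ : b₂ ≠ 0 := by
    intro h
    rw [h] at hκ'
    simp at hκ'
  have hb : b₁ * b₂ = A ^ 2 * (a₁ * a₂) := by
    field_simp at hA; linear_combination -hA
  intro z
  obtain ⟨z₁, z₂⟩ := z
  refine ⟨?_, ?_⟩
  · have hgc : ∀ w : ℂ, g ((w, z₂) - c) = A * (w - c.1) + g₂ (z₂ - c.2) := by
      intro w
      have h : ((w, z₂) : ℂ × ℂ) - c = (w - c.1, z₂ - c.2) := rfl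
      rw [h, hg]
    set E := I * (A * (z₁ - c.1) + g₂ (z₂ - c.2)) with hE
    have hd : HasDerivAt (fun w => f (w, z₂))
        ((a₁ * (exp E * (I * A)) - a₂ * (exp (-E) * (-(I * A)))) / (2 * I * D)) z₁ := by
      have h1 : HasDerivAt (fun w : ℂ => I * (A * (w - c.1) + g₂ (z₂ - c.2))) (I * A) z₁ := by
        have h0 : HasDerivAt (fun w : ℂ => A * (w - c.1) + g₂ (z₂ - c.2)) A z₁ := by
          simpa using (((hasDerivAt_id z₁).sub_const c.1).const_mul A).add_const (g₂ (z₂ - c.2))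
        simpa [mul_comm] using h0.const_mul I
      have h2 := h1.cexp
      have h3 := h1.neg.cexp
      have h4 := ((h2.const_mul a₁).sub (h3.const_mul a₂)).div_const (2 * I * D)
      have heq : (fun w => f (w, z₂)) = fun w =>
          (a₁ * exp (I * (A * (w - c.1) + g₂ (z₂ - c.2)))
            - a₂ * exp (-(I * (A * (w - c.1) + g₂ (z₂ - c.2))))) / (2 * I * D) := by
        funext w
        rw [hf, hgc]
      rw [heq]
      exact h4
    rw [hd.deriv]
    have hgz : g (z₁, z₂) = (A * (z₁ - c.1) + g₂ (z₂ - c.2)) + κ := by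
      have h := hκ (z₁, z₂)
      rw [hgc z₁] at h
      linear_combination h
    have e1 : exp (I * g (z₁, z₂)) = exp E * exp (I * κ) := by
      rw [hgz, ← exp_add, hE]; ring_nf
    have e2 : exp (-(I * g (z₁, z₂))) = exp (-E) * (exp (I * κ))⁻¹ := by
      rw [hgz, ← exp_neg, ← exp_add, hE]; ring_nf
    rw [e1, e2, hκ']
    congr 1
    set u := exp E
    set v := exp (-E)
    field_simp
    linear_combination u * hb + (u * A ^ 2 * a₁ * a₂) * Complex.I_sq
  · rw [hf]
    simp
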